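/- For every integer n ≥ 4, L(n) = L(n−1) or L(n) = L(n+1); equivalently, L(n+1) ≤ L(n−1) + 1 for n ≥ 4. -/
import Mathlib

noncomputable def L (n : ℕ) : ℕ :=
  sInf {k : ℕ | 0 < k ∧ (n.choose k : ℝ) > 2 ^ n / n}

private lemma L_set_eq (n : ℕ) (hn : 0 < n) :
    {k : ℕ | 0 < k ∧ (n.choose k : ℝ) > 2 ^ n / n} =
    {k : ℕ | 0 < k ∧ 2 ^ n < n * n.choose k} := by
  ext k
  simp only [Set.mem_setOf_eq, gt_iff_lt, and_congr_right_iff]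
  intro _
  rw [div_lt_iff₀ (by exact_mod_cast hn : (0:ℝ) < (n:ℝ))]
  constructor
  · intro h
    have h2 : ((2:ℝ))^n < ((n * n.choose k : ℕ) : ℝ) := by push_cast; linarith
    exact_mod_cast h2
  · intro h
    have h2 : ((2^n : ℕ) : ℝ) < ((n * n.choose k : ℕ) : ℝ) := by exact_mod_cast h
    push_cast at h2
    linarith

private lemma central (n : ℕ) (hn : 3 ≤ n) : 2 ^ n < n * n.choose (n / 2) := by
  have hC : n ≤ n.choose (n / 2) := by
    have := Nat.choose_le_middle 1 n
    simpa [Nat.choose_one_right] using this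
  obtain ⟨m, rfl⟩ : ∃ m, n = m + 2 := ⟨n - 2, by omega⟩
  have hsum : 2 ^ (m + 2) ≤ 2 + (m + 1) * (m + 2).choose ((m + 2) / 2) := by
    rw [← Nat.sum_range_choose (m + 2)]
    rw [Finset.sum_range_succ, Finset.sum_range_succ']
    have hb : ∑ i ∈ Finset.range (m + 1), (m + 2).choose (i + 1)
        ≤ (m + 1) * (m + 2).choose ((m + 2) / 2) := by
      calc ∑ i ∈ Finset.range (m + 1), (m + 2).choose (i + 1)
          ≤ ∑ _i ∈ Finset.range (m + 1), (m + 2).choose ((m + 2) / 2) :=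
            Finset.sum_le_sum fun i _ => Nat.choose_le_middle (i + 1) (m + 2)
        _ = (m + 1) * (m + 2).choose ((m + 2) / 2) := by
            rw [Finset.sum_const, Finset.card_range, smul_eq_mul]
    simp only [Nat.choose_zero_right, Nat.choose_self]
    omega
  nlinarith [hC, hsum]

private lemma L_mem (n : ℕ) (hn : 3 ≤ n) :
    0 < L n ∧ 2 ^ n < n * n.choose (L n) ∧ L n ≤ n / 2 := by
  have h0 : 0 < n := by omega
  have hL : L n = sInf {k : ℕ | 0 < k ∧ 2 ^ n < n * n.choose k} := by
    rw [L, L_set_eq n h0]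
  have hmem : n / 2 ∈ {k : ℕ | 0 < k ∧ 2 ^ n < n * n.choose k} :=
    ⟨by omega, central n hn⟩
  have h1 : L n ∈ {k : ℕ | 0 < k ∧ 2 ^ n < n * n.choose k} := by
    rw [hL]; exact Nat.sInf_mem ⟨_, hmem⟩
  have h2 : L n ≤ n / 2 := by rw [hL]; exact Nat.sInf_le hmem
  exact ⟨h1.1, h1.2, h2⟩

private lemma L_le (n k : ℕ) (hn : 0 < n) (hk : 0 < k) (h : 2 ^ n < n * n.choose k) :
    L n ≤ k := by
  rw [L, L_set_eq n hn]
  exact Nat.sInf_le ⟨hk, h⟩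

private lemma L_mono (m : ℕ) (hm : 3 ≤ m) : L m ≤ L (m + 1) := by
  obtain ⟨hpos, hb, hhalf⟩ := L_mem (m + 1) (by omega)
  obtain ⟨j, hj⟩ : ∃ j, L (m + 1) = j + 1 := ⟨L (m + 1) - 1, by omega⟩
  rw [hj] at hb hhalf
  rw [hj]
  by_cases hcase : 2 * j + 3 ≤ m
  · -- main case
    apply L_le m (j + 1) (by omega) (by omega)
    have hpas : (m + 1).choose (j + 1) = m.choose j + m.choose (j + 1) :=
      Nat.choose_succ_succ m j
    rw [hpas] at hb
    have hrel := Nat.choose_succ_right_eq m j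
    -- cast to ℤ
    have h1 : (2:ℤ) ^ (m + 1) < ((m:ℤ) + 1) * ((m.choose j : ℤ) + (m.choose (j+1) : ℤ)) := by
      exact_mod_cast hb
    have h2 : ((m.choose (j+1) : ℤ)) * ((j:ℤ) + 1) = (m.choose j : ℤ) * ((m:ℤ) - (j:ℤ)) := by
      have : (m : ℤ) - (j : ℤ) = ((m - j : ℕ) : ℤ) := by
        rw [Nat.cast_sub (by omega)]
      rw [this]
      exact_mod_cast hrel
    set A : ℤ := (m.choose j : ℤ) with hA
    set B : ℤ := (m.choose (j+1) : ℤ) with hB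
    have hA0 : 0 ≤ A := Int.natCast_nonneg _
    have hB0 : 0 ≤ B := Int.natCast_nonneg _
    have hcZ : 2 * (j:ℤ) + 3 ≤ (m:ℤ) := by exact_mod_cast hcase
    have hjZ : 0 ≤ (j:ℤ) := Int.natCast_nonneg _
    have hd0 : (0:ℤ) < (m:ℤ) - (j:ℤ) := by linarith
    -- multiply h1 by (m - j)
    have h1m : 2 * (2:ℤ)^m * ((m:ℤ) - j) < ((m:ℤ) + 1)^2 * B := by
      have e1 : (2:ℤ)^(m+1) = 2 * 2^m := by ring
      have h3 : (2:ℤ)^(m+1) * ((m:ℤ) - j) < ((m:ℤ) + 1) * (A + B) * ((m:ℤ) - j) :=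
        mul_lt_mul_of_pos_right h1 hd0
      calc 2 * (2:ℤ)^m * ((m:ℤ) - j) = (2:ℤ)^(m+1) * ((m:ℤ) - j) := by ring
        _ < ((m:ℤ) + 1) * (A + B) * ((m:ℤ) - j) := h3
        _ = ((m:ℤ) + 1) * (A * ((m:ℤ) - j) + B * ((m:ℤ) - j)) := by ring
        _ = ((m:ℤ) + 1) * (B * ((j:ℤ) + 1) + B * ((m:ℤ) - j)) := by rw [h2]
        _ = ((m:ℤ) + 1)^2 * B := by ring
    have h3 : ((m:ℤ) + 1)^2 ≤ 2 * (m:ℤ) * ((m:ℤ) - j) := by nlinarith [hcZ, hjZ]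
    have hX : (0:ℤ) < 2^m := by positivity
    have h4 : (2:ℤ)^m * ((m:ℤ)+1)^2 < ((m:ℤ) * B) * ((m:ℤ)+1)^2 := by
      calc (2:ℤ)^m * ((m:ℤ)+1)^2 ≤ (2:ℤ)^m * (2 * (m:ℤ) * ((m:ℤ) - j)) := by
            exact mul_le_mul_of_nonneg_left h3 (le_of_lt hX)
        _ = (m:ℤ) * (2 * (2:ℤ)^m * ((m:ℤ) - j)) := by ring
        _ < (m:ℤ) * (((m:ℤ)+1)^2 * B) := by
            apply mul_lt_mul_of_pos_left h1m
            exact_mod_cast (by omega : 0 < m)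
        _ = ((m:ℤ) * B) * ((m:ℤ)+1)^2 := by ring
    have h5 : (2:ℤ)^m < (m:ℤ) * B := lt_of_mul_lt_mul_right h4 (by positivity)
    rw [hB] at h5
    exact_mod_cast h5
  · -- central case: m = 2j+1 or m = 2j+2
    apply L_le m (j + 1) (by omega) (by omega)
    have h5 : m.choose (j + 1) = m.choose (m / 2) := by
      rcases (by omega : m = 2 * j + 1 ∨ m = 2 * j + 2) with h | h
      · rw [show j + 1 = m - m / 2 by omega, Nat.choose_symm (by omega)]
      · rw [show j + 1 = m / 2 by omega]
    rw [h5]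
    exact central m hm

private lemma L_twostep (m : ℕ) (hm : 3 ≤ m) : L (m + 2) ≤ L m + 1 := by
  obtain ⟨hpos, hb, hhalf⟩ := L_mem m hm
  obtain ⟨j, hj⟩ : ∃ j, L m = j + 1 := ⟨L m - 1, by omega⟩
  rw [hj] at hb hhalf
  rw [hj]
  obtain ⟨v, rfl⟩ : ∃ v, m = j + 1 + v := ⟨m - j - 1, by omega⟩
  apply L_le (j + 1 + v + 2) (j + 2) (by omega) (by omega)
  have hpas : (j + 1 + v + 2).choose (j + 2)
      = (j + 1 + v).choose j + 2 * (j + 1 + v).choose (j + 1) + (j + 1 + v).choose (j + 2) := by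
    have e1 : j + 1 + v + 2 = (j + 1 + v + 1) + 1 := by ring
    rw [e1, Nat.choose_succ_succ (j + 1 + v + 1) (j + 1),
        Nat.choose_succ_succ (j + 1 + v) j, Nat.choose_succ_succ (j + 1 + v) (j + 1)]
    ring
  rw [hpas]
  have hr1 := Nat.choose_succ_right_eq (j + 1 + v) j
  have hr2 := Nat.choose_succ_right_eq (j + 1 + v) (j + 1)
  rw [show j + 1 + v - j = v + 1 by omega] at hr1
  rw [show j + 1 + v - (j + 1) = v by omega] at hr2
  set A := (j + 1 + v).choose j
  set B := (j + 1 + v).choose (j + 1)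
  set C := (j + 1 + v).choose (j + 2)
  -- cast to ℤ
  have h1 : (B:ℤ) * ((j:ℤ) + 1) = (A:ℤ) * ((v:ℤ) + 1) := by exact_mod_cast hr1
  have h2 : (C:ℤ) * ((j:ℤ) + 2) = (B:ℤ) * (v:ℤ) := by exact_mod_cast hr2
  have hbZ : (2:ℤ) ^ (j + 1 + v) < ((j:ℤ) + v + 1) * (B:ℤ) := by
    have : ((2 ^ (j+1+v) : ℕ) : ℤ) < (((j + 1 + v) * B : ℕ) : ℤ) := by exact_mod_cast hb
    push_cast at this
    linarith
  have hvZ : (j:ℤ) + 1 ≤ (v:ℤ) := by exact_mod_cast (by omega : j + 1 ≤ v)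
  have hjZ : (0:ℤ) ≤ (j:ℤ) := Int.natCast_nonneg _
  have hA0 : (0:ℤ) ≤ (A:ℤ) := Int.natCast_nonneg _
  have hB0 : (0:ℤ) ≤ (B:ℤ) := Int.natCast_nonneg _
  have hC0 : (0:ℤ) ≤ (C:ℤ) := Int.natCast_nonneg _
  have key : ((j:ℤ) + 2) * ((v:ℤ) + 1) * (((j:ℤ) + v + 3) * ((A:ℤ) + 2*(B:ℤ) + (C:ℤ)))
      = ((j:ℤ) + v + 3)^2 * ((j:ℤ) + v + 2) * (B:ℤ) := by
    linear_combination (-(((j:ℤ) + 2) * ((j:ℤ) + v + 3))) * h1 + (((v:ℤ) + 1) * ((j:ℤ) + v + 3)) * h2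
  suffices hZ : (2:ℤ) ^ (j + 1 + v + 2) < ((j:ℤ) + v + 3) * ((A:ℤ) + 2*(B:ℤ) + (C:ℤ)) by
    have h9 : ((2 ^ (j + 1 + v + 2) : ℕ) : ℤ) < (((j + 1 + v + 2) * (A + 2 * B + C) : ℕ) : ℤ) := by
      push_cast
      linarith
    exact_mod_cast h9
  have hP : (0:ℤ) < 2 ^ (j + 1 + v) := by positivity
  have hpos2 : (0:ℤ) < ((j:ℤ) + 2) * ((v:ℤ) + 1) := by positivity
  have e2 : (2:ℤ) ^ (j + 1 + v + 2) = 4 * 2 ^ (j + 1 + v) := by ring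
  rw [e2]
  have step1 : ((j:ℤ) + 2) * ((v:ℤ) + 1) * (4 * 2 ^ (j + 1 + v))
      < ((j:ℤ) + 2) * ((v:ℤ) + 1) * (4 * (((j:ℤ) + v + 1) * (B:ℤ))) := by
    apply mul_lt_mul_of_pos_left _ hpos2
    linarith
  have step2 : ((j:ℤ) + 2) * ((v:ℤ) + 1) * (4 * (((j:ℤ) + v + 1) * (B:ℤ)))
      ≤ ((j:ℤ) + 2) * ((v:ℤ) + 1) * (((j:ℤ) + v + 3) * ((A:ℤ) + 2*(B:ℤ) + (C:ℤ))) := by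
    rw [key]
    nlinarith [mul_nonneg (mul_nonneg (show (0:ℤ) ≤ (j:ℤ) + v + 2 by linarith) hB0)
        (sq_nonneg ((v:ℤ) - (j:ℤ) - 1)),
      mul_nonneg (mul_nonneg (show (0:ℤ) ≤ (j:ℤ) + 2 by linarith)
        (show (0:ℤ) ≤ (v:ℤ) + 1 by linarith)) hB0]
  have := lt_of_lt_of_le step1 step2
  exact lt_of_mul_lt_mul_left this (le_of_lt hpos2)

theorem L_eq_pred_or_succ (n : ℕ) (hn : 4 ≤ n) :
    (L n = L (n - 1) ∨ L n = L (n + 1)) ∧ L (n + 1) ≤ L (n - 1) + 1 := by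
  obtain ⟨m, rfl⟩ : ∃ m, n = m + 1 := ⟨n - 1, by omega⟩
  have hm : 3 ≤ m := by omega
  have h1 : L m ≤ L (m + 1) := L_mono m hm
  have h2 : L (m + 1) ≤ L (m + 2) := L_mono (m + 1) (by omega)
  have h3 : L (m + 2) ≤ L m + 1 := L_twostep m hm
  simp only [Nat.add_sub_cancel]
  have e : m + 1 + 1 = m + 2 := by ring
  rw [e]
  omega
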